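/- If G and H both admit interval colorings, H is an r-regular graph, and |V(H)| = n, then the lexicographic product G[H] admits an interval coloring; moreover w(G[H]) ≤ w(G)·n + r and W(G[H]) ≥ W(G)·n + r. -/

import Mathlib

open SimpleGraph

/-- `c` is an interval `t`-coloring of `G`: edges get colors in `{1,…,t}`, every color
`1,…,t` is used, adjacent edges get distinct colors, and the set of colors of edges
incident to any vertex is an interval of integers. -/
def IsIntervalColoring {V : Type*} (G : SimpleGraph V) (t : ℕ) (c : Sym2 V → ℕ) : Prop :=
  (∀ e ∈ G.edgeSet, 1 ≤ c e ∧ c e ≤ t) ∧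
  (∀ i, 1 ≤ i → i ≤ t → ∃ e ∈ G.edgeSet, c e = i) ∧
  (∀ v w₁ w₂, G.Adj v w₁ → G.Adj v w₂ → w₁ ≠ w₂ → c s(v, w₁) ≠ c s(v, w₂)) ∧
  (∀ v i j k, (∃ w, G.Adj v w ∧ c s(v, w) = i) → (∃ w, G.Adj v w ∧ c s(v, w) = k) →
    i ≤ j → j ≤ k → ∃ w, G.Adj v w ∧ c s(v, w) = j)

/-- `G` has an interval `t`-coloring. -/
def HasIntervalColoring {V : Type*} (G : SimpleGraph V) (t : ℕ) : Prop :=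
  ∃ c : Sym2 V → ℕ, IsIntervalColoring G t c

/-- `G` is interval colorable (`G ∈ 𝔑`). -/
def IntervalColorable {V : Type*} (G : SimpleGraph V) : Prop :=
  ∃ t : ℕ, 1 ≤ t ∧ HasIntervalColoring G t

/-- `w G`: the least number of colors in an interval coloring of `G`. -/
noncomputable def wNum {V : Type*} (G : SimpleGraph V) : ℕ :=
  sInf {t | HasIntervalColoring G t}

/-- `W G`: the greatest number of colors in an interval coloring of `G`. -/
noncomputable def WNum {V : Type*} (G : SimpleGraph V) : ℕ :=
  sSup {t | HasIntervalColoring G t}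

/-- `G` is `r`-regular: every vertex has exactly `r` neighbors. -/
def IsRegularGraph {V : Type*} (G : SimpleGraph V) (r : ℕ) : Prop :=
  ∀ v : V, (G.neighborSet v).ncard = r

/-- `c` is a proper edge coloring of `G` using colors `0,…,k-1`. -/
def IsProperEdgeColoring {V : Type*} (G : SimpleGraph V) (k : ℕ) (c : Sym2 V → ℕ) : Prop :=
  (∀ e ∈ G.edgeSet, c e < k) ∧
  (∀ v w₁ w₂, G.Adj v w₁ → G.Adj v w₂ → w₁ ≠ w₂ → c s(v, w₁) ≠ c s(v, w₂))

/-- The chromatic index `χ'(G)`. -/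
noncomputable def edgeChromaticNumber {V : Type*} (G : SimpleGraph V) : ℕ :=
  sInf {k | ∃ c : Sym2 V → ℕ, IsProperEdgeColoring G k c}

/-- `G` is 1-factorable: its edge set decomposes into perfect matchings. -/
def IsOneFactorable {V : Type*} (G : SimpleGraph V) : Prop :=
  ∃ (n : ℕ) (f : Fin n → SimpleGraph.Subgraph G),
    (∀ i, (f i).IsPerfectMatching) ∧
    (∀ e ∈ G.edgeSet, ∃! i, e ∈ (f i).edgeSet)

/-- The tensor (direct) product `G × H`. -/
def tensorProd {α β : Type*} (G : SimpleGraph α) (H : SimpleGraph β) :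
    SimpleGraph (α × β) where
  Adj p q := G.Adj p.1 q.1 ∧ H.Adj p.2 q.2
  symm := ⟨fun p q ⟨h₁, h₂⟩ => ⟨h₁.symm, h₂.symm⟩⟩
  loopless := ⟨fun p h => G.loopless.irrefl p.1 h.1⟩

/-- The strong tensor (semistrong) product `G ⊗ H`. -/
def strongTensorProd {α β : Type*} (G : SimpleGraph α) (H : SimpleGraph β) :
    SimpleGraph (α × β) where
  Adj p q := (G.Adj p.1 q.1 ∧ H.Adj p.2 q.2) ∨ (p.2 = q.2 ∧ G.Adj p.1 q.1)
  symm := ⟨fun p q h => by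
    rcases h with ⟨h₁, h₂⟩ | ⟨h₁, h₂⟩
    · exact Or.inl ⟨h₁.symm, h₂.symm⟩
    · exact Or.inr ⟨h₁.symm, h₂.symm⟩⟩
  loopless := ⟨fun p h => by
    rcases h with ⟨h₁, _⟩ | ⟨_, h₁⟩ <;> exact G.loopless.irrefl p.1 h₁⟩

/-- The strong product `G ⊠ H`. -/
def strongProd {α β : Type*} (G : SimpleGraph α) (H : SimpleGraph β) :
    SimpleGraph (α × β) where
  Adj p q := (G.Adj p.1 q.1 ∧ H.Adj p.2 q.2) ∨ (p.1 = q.1 ∧ H.Adj p.2 q.2) ∨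
    (p.2 = q.2 ∧ G.Adj p.1 q.1)
  symm := ⟨fun p q h => by
    rcases h with ⟨h₁, h₂⟩ | ⟨h₁, h₂⟩ | ⟨h₁, h₂⟩
    · exact Or.inl ⟨h₁.symm, h₂.symm⟩
    · exact Or.inr (Or.inl ⟨h₁.symm, h₂.symm⟩)
    · exact Or.inr (Or.inr ⟨h₁.symm, h₂.symm⟩)⟩
  loopless := ⟨fun p h => by
    rcases h with ⟨h₁, _⟩ | ⟨_, h₂⟩ | ⟨_, h₁⟩
    · exact G.loopless.irrefl p.1 h₁
    · exact H.loopless.irrefl p.2 h₂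
    · exact G.loopless.irrefl p.1 h₁⟩

/-- The lexicographic product (composition) `G[H]`. -/
def lexProd {α β : Type*} (G : SimpleGraph α) (H : SimpleGraph β) :
    SimpleGraph (α × β) where
  Adj p q := G.Adj p.1 q.1 ∨ (p.1 = q.1 ∧ H.Adj p.2 q.2)
  symm := ⟨fun p q h => by
    rcases h with h₁ | ⟨h₁, h₂⟩
    · exact Or.inl h₁.symm
    · exact Or.inr ⟨h₁.symm, h₂.symm⟩⟩
  loopless := ⟨fun p h => by
    rcases h with h₁ | ⟨_, h₂⟩
    · exact G.loopless.irrefl p.1 h₁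
    · exact H.loopless.irrefl p.2 h₂⟩

section AuxIntervalLex

lemma set_icc_ncard' (a b : ℕ) : (Set.Icc a b).ncard = b + 1 - a := by
  rw [show Set.Icc a b = ↑(Finset.Icc a b) by simp, Set.ncard_coe_finset, Nat.card_Icc]

lemma set_iio_ncard' (n : ℕ) : (Set.Iio n).ncard = n := by
  rw [show Set.Iio n = ↑(Finset.Iio n) by simp, Set.ncard_coe_finset, Nat.card_Iio]

lemma block_arith' {n a b k l : ℕ} (ha : a < n) (hb : b < n) (h : k * n + a = l * n + b) :
    k = l ∧ a = b := by
  rcases lt_trichotomy k l with hkl | hkl | hkl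
  · exfalso
    have h1 : (k + 1) * n ≤ l * n := Nat.mul_le_mul_right n hkl
    have h2 : (k + 1) * n = k * n + n := by ring
    omega
  · subst hkl; omega
  · exfalso
    have h1 : (l + 1) * n ≤ k * n := Nat.mul_le_mul_right n hkl
    have h2 : (l + 1) * n = l * n + n := by ring
    omega

lemma regular_aux' {β : Type*} [Fintype β] {H : SimpleGraph β} {r s : ℕ} {cH : Sym2 β → ℕ}
    (h : IsIntervalColoring H s cH) (hreg : IsRegularGraph H r) :
    ∃ d : Sym2 β → ℕ,
      (∀ v w, H.Adj v w → d s(v, w) < r) ∧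
      (∀ v w₁ w₂, H.Adj v w₁ → H.Adj v w₂ → w₁ ≠ w₂ → d s(v, w₁) ≠ d s(v, w₂)) ∧
      (∀ v j, j < r → ∃ w, H.Adj v w ∧ d s(v, w) = j) := by
  obtain ⟨h1, _, h3, h4⟩ := h
  have hpos : ∀ {v w : β}, H.Adj v w → 1 ≤ cH s(v, w) := fun hadj => (h1 _ hadj).1
  have hrpos : ∀ {v w : β}, H.Adj v w → 1 ≤ r := by
    intro v w hadj
    have h0 := hreg v
    have : 0 < (H.neighborSet v).ncard := (Set.ncard_pos (Set.toFinite _)).2 ⟨w, hadj⟩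
    omega
  have gap : ∀ v w₁ w₂, H.Adj v w₁ → H.Adj v w₂ → cH s(v, w₁) ≤ cH s(v, w₂) →
      cH s(v, w₂) < cH s(v, w₁) + r := by
    intro v w₁ w₂ ha₁ ha₂ hle
    set c₁ := cH s(v, w₁); set c₂ := cH s(v, w₂)
    classical
    have hex : ∀ j ∈ Set.Icc c₁ c₂, ∃ w, H.Adj v w ∧ cH s(v, w) = j := by
      intro j hj
      exact h4 v c₁ j c₂ ⟨w₁, ha₁, rfl⟩ ⟨w₂, ha₂, rfl⟩ hj.1 hj.2
    set f : ℕ → β := fun j => if hj : ∃ w, H.Adj v w ∧ cH s(v, w) = j then hj.choose else w₁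
    have hf : ∀ j ∈ Set.Icc c₁ c₂, H.Adj v (f j) ∧ cH s(v, f j) = j := by
      intro j hj
      have hj' : ∃ w, H.Adj v w ∧ cH s(v, w) = j := hex j hj
      simp only [f, dif_pos hj']
      exact hj'.choose_spec
    have hcard : (Set.Icc c₁ c₂).ncard ≤ (H.neighborSet v).ncard := by
      apply Set.ncard_le_ncard_of_injOn f
      · intro j hj; exact (hf j hj).1
      · intro j hj j' hj' hee
        rw [← (hf j hj).2, ← (hf j' hj').2, hee]
    rw [hreg v, set_icc_ncard'] at hcard
    omega
  classical
  refine ⟨fun e => (cH e - 1) % r, ?_, ?_, ?_⟩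
  · intro v w hadj; exact Nat.mod_lt _ (hrpos hadj)
  · intro v w₁ w₂ ha₁ ha₂ hne heq
    rcases le_total (cH s(v, w₁)) (cH s(v, w₂)) with hle | hle
    · have hne' := h3 v w₁ w₂ ha₁ ha₂ hne
      have h₁ := hpos ha₁
      have hg := gap v w₁ w₂ ha₁ ha₂ hle
      have hmeq : (cH s(v, w₁) - 1) ≡ (cH s(v, w₂) - 1) [MOD r] := heq
      have hdvd := (Nat.modEq_iff_dvd' (by omega)).1 hmeq
      have := Nat.le_of_dvd (by omega) hdvd
      omega
    · have hne' := h3 v w₂ w₁ ha₂ ha₁ (Ne.symm hne)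
      have h₁ := hpos ha₂
      have hg := gap v w₂ w₁ ha₂ ha₁ hle
      have hmeq : (cH s(v, w₂) - 1) ≡ (cH s(v, w₁) - 1) [MOD r] := heq.symm
      have hdvd := (Nat.modEq_iff_dvd' (by omega)).1 hmeq
      have := Nat.le_of_dvd (by omega) hdvd
      omega
  · intro v j hj
    set g : β → ℕ := fun w => (cH s(v, w) - 1) % r
    have himg : g '' (H.neighborSet v) = Set.Iio r := by
      apply Set.eq_of_subset_of_ncard_le
      · rintro x ⟨w, hw, rfl⟩
        exact Nat.mod_lt _ (hrpos hw)
      · rw [set_iio_ncard', Set.ncard_image_of_injOn, hreg v]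
        intro w₁ hw₁ w₂ hw₂ hee
        by_contra hne
        rcases le_total (cH s(v, w₁)) (cH s(v, w₂)) with hle | hle
        · have hne' := h3 v w₁ w₂ hw₁ hw₂ hne
          have h₁ := hpos (hw₁ : H.Adj v w₁)
          have hg := gap v w₁ w₂ hw₁ hw₂ hle
          have hmeq : (cH s(v, w₁) - 1) ≡ (cH s(v, w₂) - 1) [MOD r] := hee
          have hdvd := (Nat.modEq_iff_dvd' (by omega)).1 hmeq
          have := Nat.le_of_dvd (by omega) hdvd
          omega
        · have hne' := h3 v w₂ w₁ hw₂ hw₁ (Ne.symm hne)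
          have h₁ := hpos (hw₂ : H.Adj v w₂)
          have hg := gap v w₂ w₁ hw₂ hw₁ hle
          have hmeq : (cH s(v, w₂) - 1) ≡ (cH s(v, w₁) - 1) [MOD r] := hee.symm
          have hdvd := (Nat.modEq_iff_dvd' (by omega)).1 hmeq
          have := Nat.le_of_dvd (by omega) hdvd
          omega
      · exact Set.toFinite _
    have hjim : j ∈ g '' (H.neighborSet v) := himg ▸ hj
    obtain ⟨w, hw, hgw⟩ := hjim
    exact ⟨w, hw, hgw⟩

lemma has_bddAbove' {V : Type*} [Fintype V] (G : SimpleGraph V) :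
    BddAbove {t | HasIntervalColoring G t} := by
  classical
  refine ⟨Fintype.card (Sym2 V), ?_⟩
  rintro t ⟨c, h1, h2, -, -⟩
  rcases Nat.eq_zero_or_pos t with rfl | ht
  · exact Nat.zero_le _
  obtain ⟨e₁, he₁, -⟩ := h2 1 le_rfl ht
  set f : ℕ → Sym2 V := fun i => if hi : ∃ e ∈ G.edgeSet, c e = i then hi.choose else e₁
  have hf : ∀ i ∈ Set.Icc 1 t, f i ∈ G.edgeSet ∧ c (f i) = i := by
    intro i hi
    have hi' : ∃ e ∈ G.edgeSet, c e = i := h2 i hi.1 hi.2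
    simp only [f, dif_pos hi']
    exact hi'.choose_spec
  have hcard : (Set.Icc 1 t).ncard ≤ (Set.univ : Set (Sym2 V)).ncard := by
    apply Set.ncard_le_ncard_of_injOn f
    · intro i _; exact Set.mem_univ _
    · intro i hi i' hi' hee
      rw [← (hf i hi).2, ← (hf i' hi').2, hee]
  rw [set_icc_ncard'] at hcard
  have : (Set.univ : Set (Sym2 V)).ncard = Fintype.card (Sym2 V) :=
    (Set.ncard_univ _).trans Nat.card_eq_fintype_card
  omega

lemma edge_of_has' {V : Type*} {G : SimpleGraph V} {t : ℕ} (ht : 1 ≤ t)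
    (h : HasIntervalColoring G t) : ∃ a b, G.Adj a b := by
  obtain ⟨c, -, h2, -, -⟩ := h
  obtain ⟨e, he, -⟩ := h2 1 le_rfl ht
  revert he
  exact Sym2.ind (fun a b h => ⟨a, b, (SimpleGraph.mem_edgeSet G).1 h⟩) e

lemma not_has_zero' {V : Type*} {G : SimpleGraph V} (h : ∃ a b, G.Adj a b) :
    ¬ HasIntervalColoring G 0 := by
  rintro ⟨c, h1, -, -, -⟩
  obtain ⟨a, b, hab⟩ := h
  have := h1 s(a, b) ((SimpleGraph.mem_edgeSet G).2 hab)
  omega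

lemma key_lex' {α β : Type*} [Fintype α] [Fintype β]
    (G : SimpleGraph α) (H : SimpleGraph β) (r n t : ℕ)
    (ht : 1 ≤ t) (hGt : HasIntervalColoring G t)
    (hH : IntervalColorable H)
    (hreg : IsRegularGraph H r) (hcard : Fintype.card β = n) :
    HasIntervalColoring (lexProd G H) (t * n + r) := by
  classical
  obtain ⟨cG, hG1, hG2, hG3, hG4⟩ := hGt
  obtain ⟨sH, hsH, cH, hcH⟩ := hH
  obtain ⟨v₁, v₂, hv12⟩ : ∃ a b, H.Adj a b := edge_of_has' hsH ⟨cH, hcH⟩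
  have hr1 : 1 ≤ r := by
    have h0 := hreg v₁
    have : 0 < (H.neighborSet v₁).ncard := (Set.ncard_pos (Set.toFinite _)).2 ⟨v₂, hv12⟩
    omega
  have hrn : r < n := by
    have h0 := hreg v₁
    have hss : H.neighborSet v₁ ⊂ Set.univ := by
      rw [Set.ssubset_univ_iff]
      intro hEq
      have : v₁ ∈ H.neighborSet v₁ := hEq ▸ Set.mem_univ v₁
      exact H.irrefl this
    have := Set.ncard_lt_ncard hss (Set.toFinite _)
    rw [(Set.ncard_univ _).trans Nat.card_eq_fintype_card, hcard] at this
    omega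
  have hn : 1 ≤ n := by omega
  obtain ⟨dH, hd1, hd2, hd3⟩ := regular_aux' hcH hreg
  set idx : β ≃ Fin n := Fintype.equivFinOfCardEq hcard with hidx
  set S : α → Set ℕ := fun u => {k | ∃ w, G.Adj u w ∧ cG s(u, w) = k} with hS
  set m : α → ℕ := fun u => sSup (S u) with hm
  have hSbdd : ∀ u, BddAbove (S u) := by
    intro u
    refine ⟨t, ?_⟩
    rintro k ⟨w, hw, rfl⟩
    exact (hG1 _ ((SimpleGraph.mem_edgeSet G).2 hw)).2
  have hmem : ∀ u k, k ∈ S u → k ≤ m u := fun u k hk => le_csSup (hSbdd u) hk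
  have hmS : ∀ u, (S u).Nonempty → m u ∈ S u := fun u h => Nat.sSup_mem h (hSbdd u)
  have hmle : ∀ u, m u ≤ t := by
    intro u
    rcases Set.eq_empty_or_nonempty (S u) with h | h
    · simp [hm, h]
    · rcases hmS u h with ⟨w, hw, hcw⟩
      rw [← hcw]
      exact (hG1 _ ((SimpleGraph.mem_edgeSet G).2 hw)).2
  have hcG1 : ∀ {u w : α}, G.Adj u w → 1 ≤ cG s(u, w) :=
    fun h => (hG1 _ ((SimpleGraph.mem_edgeSet G).2 h)).1
  have hcGt : ∀ {u w : α}, G.Adj u w → cG s(u, w) ≤ t :=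
    fun h => (hG1 _ ((SimpleGraph.mem_edgeSet G).2 h)).2
  have hcGle : ∀ {u w : α}, G.Adj u w → cG s(u, w) ≤ m u :=
    fun h => hmem _ _ ⟨_, h, rfl⟩
  set F : α × β → α × β → ℕ := fun p q =>
    if p.1 = q.1 then m p.1 * n + 1 + dH s(p.2, q.2)
    else (cG s(p.1, q.1) - 1) * n + 1 + ((idx p.2 : ℕ) + (idx q.2 : ℕ)) % n with hF
  have Fsymm : ∀ p q, F p q = F q p := by
    intro p q
    simp only [hF]
    rcases eq_or_ne p.1 q.1 with h | h
    · rw [if_pos h, if_pos h.symm, h, Sym2.eq_swap]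
    · rw [if_neg h, if_neg (Ne.symm h), Sym2.eq_swap, Nat.add_comm ((idx p.2 : ℕ)) _]
  set cc : Sym2 (α × β) → ℕ := Sym2.lift ⟨F, Fsymm⟩ with hccdef
  have hcc : ∀ p q : α × β, cc s(p, q) = F p q := fun p q => Sym2.lift_mk _ _ _
  have adjiff : ∀ p q : α × β,
      (lexProd G H).Adj p q ↔ (G.Adj p.1 q.1 ∨ (p.1 = q.1 ∧ H.Adj p.2 q.2)) :=
    fun _ _ => Iff.rfl
  -- every color of a block of a G-edge at u is achieved at (u, v)
  have achG : ∀ (u : α) (v : β) (u' : α), G.Adj u u' → ∀ x,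
      (cG s(u, u') - 1) * n + 1 ≤ x → x ≤ cG s(u, u') * n →
      ∃ q, (lexProd G H).Adj (u, v) q ∧ cc s((u, v), q) = x := by
    intro u v u' hadj x hx1 hx2
    obtain ⟨k', hk'⟩ : ∃ k', cG s(u, u') = k' + 1 :=
      ⟨cG s(u, u') - 1, by have := hcG1 hadj; omega⟩
    rw [hk'] at hx1 hx2
    simp only [Nat.add_sub_cancel] at hx1
    have hkn : (k' + 1) * n = k' * n + n := by ring
    set x0 := x - (k' * n + 1) with hx0def
    have hx0 : x0 < n := by omega
    have hvlt : (idx v : ℕ) < n := (idx v).2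
    set v' : β := idx.symm ⟨(x0 + (n - (idx v : ℕ))) % n, Nat.mod_lt _ (by omega)⟩ with hv'
    refine ⟨(u', v'), (adjiff _ _).2 (Or.inl hadj), ?_⟩
    rw [hcc]
    simp only [hF]
    rw [if_neg hadj.ne, hk']
    simp only [Nat.add_sub_cancel]
    have hiv' : (idx v' : ℕ) = (x0 + (n - (idx v : ℕ))) % n := by
      rw [hv', Equiv.apply_symm_apply]
    rw [hiv']
    have h1 : ((idx v : ℕ) + (x0 + (n - (idx v : ℕ)))) % n
        = ((idx v : ℕ) + (x0 + (n - (idx v : ℕ))) % n) % n := by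
      conv_lhs => rw [Nat.add_mod]
      rw [Nat.mod_eq_of_lt hvlt]
    have h2 : (idx v : ℕ) + (x0 + (n - (idx v : ℕ))) = x0 + n := by omega
    have hmod : ((idx v : ℕ) + (x0 + (n - (idx v : ℕ))) % n) % n = x0 := by
      rw [← h1, h2, Nat.add_mod_right, Nat.mod_eq_of_lt hx0]
    rw [hmod]
    omega
  -- every color in [m u * n + 1, m u * n + r] is achieved at (u, v)
  have achH : ∀ (u : α) (v : β) (x : ℕ), m u * n + 1 ≤ x → x ≤ m u * n + r →
      ∃ q, (lexProd G H).Adj (u, v) q ∧ cc s((u, v), q) = x := by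
    intro u v x h1 h2
    obtain ⟨w, hw, hdw⟩ := hd3 v (x - (m u * n + 1)) (by omega)
    refine ⟨(u, w), (adjiff _ _).2 (Or.inr ⟨rfl, hw⟩), ?_⟩
    rw [hcc]
    simp only [hF]
    rw [if_pos trivial, hdw]
    omega
  -- classification of achieved colors at (u, v)
  have achInv : ∀ (u : α) (v : β) (q : α × β), (lexProd G H).Adj (u, v) q →
      (∃ k ∈ S u, (k - 1) * n + 1 ≤ cc s((u, v), q) ∧ cc s((u, v), q) ≤ k * n) ∨
      (m u * n + 1 ≤ cc s((u, v), q) ∧ cc s((u, v), q) ≤ m u * n + r) := by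
    rintro u v ⟨u', v'⟩ hadj
    rcases (adjiff _ _).1 hadj with h | ⟨h, hH'⟩ <;> simp only at h
    · left
      refine ⟨cG s(u, u'), ⟨u', h, rfl⟩, ?_⟩
      rw [hcc]
      simp only [hF]
      rw [if_neg h.ne]
      have hmd : ((idx v : ℕ) + (idx v' : ℕ)) % n < n := Nat.mod_lt _ (by omega)
      obtain ⟨k', hk'⟩ : ∃ k', cG s(u, u') = k' + 1 :=
        ⟨cG s(u, u') - 1, by have := hcG1 h; omega⟩
      rw [hk']
      have hkn : (k' + 1) * n = k' * n + n := by ring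
      simp only [Nat.add_sub_cancel]
      omega
    · right
      rw [hcc]
      simp only [hF]
      rw [if_pos h]
      have := hd1 v v' hH'
      omega
  -- the bound m u * n ≤ t * n
  have hmul : ∀ {a b : ℕ}, a ≤ b → a * n ≤ b * n := fun h => Nat.mul_le_mul_right n h
  refine ⟨cc, ?_, ?_, ?_, ?_⟩
  · -- colors of edges lie in [1, t*n+r]
    intro e he
    revert he
    refine Sym2.ind (fun p q he => ?_) e
    have hadj : (lexProd G H).Adj p q := (SimpleGraph.mem_edgeSet _).1 he
    obtain ⟨u, v⟩ := p
    rcases achInv u v q hadj with ⟨k, hk, hx1, hx2⟩ | ⟨hx1, hx2⟩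
    · have hkt : k ≤ t := by
        obtain ⟨w, hw, rfl⟩ := hk
        exact hcGt hw
      have := hmul hkt
      constructor
      · omega
      · omega
    · have := hmul (hmle u)
      omega
  · -- every color in [1, t*n+r] is used
    intro x hx1 hx2
    obtain ⟨Q, R, hR, hQR⟩ : ∃ Q R, R < n ∧ x - 1 = Q * n + R :=
      ⟨(x - 1) / n, (x - 1) % n, Nat.mod_lt _ (by omega), (Nat.div_add_mod' (x - 1) n).symm⟩
    rcases lt_or_ge Q t with hQt | hQt
    · obtain ⟨e, he, hce⟩ := hG2 (Q + 1) (by omega) (by omega)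
      revert he hce
      refine Sym2.ind (fun u₁ u₂ he hce => ?_) e
      have hadj : G.Adj u₁ u₂ := (SimpleGraph.mem_edgeSet G).1 he
      have hx1' : (cG s(u₁, u₂) - 1) * n + 1 ≤ x := by
        rw [hce]
        simp only [Nat.add_sub_cancel]
        omega
      have hx2' : x ≤ cG s(u₁, u₂) * n := by
        rw [hce]
        have hb : (Q + 1) * n = Q * n + n := by ring
        omega
      obtain ⟨p, hp, hcp⟩ := achG u₁ v₁ u₂ hadj x hx1' hx2'
      exact ⟨s((u₁, v₁), p), (SimpleGraph.mem_edgeSet _).2 hp, hcp⟩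
    · -- top band
      have h1 : t * n ≤ Q * n := hmul hQt
      have hQt' : Q ≤ t := by
        by_contra hc
        push_neg at hc
        have h2 : (t + 1) * n ≤ Q * n := hmul hc
        have h3 : (t + 1) * n = t * n + n := by ring
        omega
      have hQeq : Q = t := by omega
      subst hQeq
      obtain ⟨e, he, hce⟩ := hG2 Q (by omega) le_rfl
      revert he hce
      refine Sym2.ind (fun u₁ u₂ he hce => ?_) e
      have hadj : G.Adj u₁ u₂ := (SimpleGraph.mem_edgeSet G).1 he
      have hmt : m u₁ = Q := by
        have ha : Q ≤ m u₁ := hce ▸ hcGle hadj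
        have hb := hmle u₁
        omega
      have hx1' : m u₁ * n + 1 ≤ x := by rw [hmt]; omega
      have hx2' : x ≤ m u₁ * n + r := by rw [hmt]; omega
      obtain ⟨p, hp, hcp⟩ := achH u₁ v₁ x hx1' hx2'
      exact ⟨s((u₁, v₁), p), (SimpleGraph.mem_edgeSet _).2 hp, hcp⟩
  · -- properness
    rintro ⟨u, v⟩ ⟨u₁, w₁⟩ ⟨u₂, w₂⟩ ha₁ ha₂ hne
    rw [hcc, hcc]
    simp only [hF]
    rcases (adjiff _ _).1 ha₁ with h₁ | ⟨h₁, hh₁⟩ <;>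
      rcases (adjiff _ _).1 ha₂ with h₂ | ⟨h₂, hh₂⟩
    · -- both cross edges
      rw [if_neg h₁.ne, if_neg h₂.ne]
      simp only at h₁ h₂
      intro heq
      obtain ⟨k₁', hk₁⟩ : ∃ k', cG s(u, u₁) = k' + 1 :=
        ⟨cG s(u, u₁) - 1, by have := hcG1 h₁; omega⟩
      obtain ⟨k₂', hk₂⟩ : ∃ k', cG s(u, u₂) = k' + 1 :=
        ⟨cG s(u, u₂) - 1, by have := hcG1 h₂; omega⟩
      rw [hk₁, hk₂] at heq
      simp only [Nat.add_sub_cancel] at heq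
      have heq' : k₁' * n + ((idx v : ℕ) + (idx w₁ : ℕ)) % n
          = k₂' * n + ((idx v : ℕ) + (idx w₂ : ℕ)) % n := by omega
      have hb := block_arith' (Nat.mod_lt ((idx v : ℕ) + (idx w₁ : ℕ)) (by omega))
        (Nat.mod_lt ((idx v : ℕ) + (idx w₂ : ℕ)) (by omega)) heq'
      rcases eq_or_ne u₁ u₂ with hu | hu
      · subst hu
        have hwne : w₁ ≠ w₂ := by
          intro hww
          exact hne (by rw [hww])
        have hmeq : ((idx v : ℕ) + (idx w₁ : ℕ)) ≡ ((idx v : ℕ) + (idx w₂ : ℕ)) [MOD n] := hb.2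
        have : (idx w₁ : ℕ) ≡ (idx w₂ : ℕ) [MOD n] := Nat.ModEq.add_left_cancel' _ hmeq
        have hww : (idx w₁ : ℕ) = (idx w₂ : ℕ) := by
          have h1 := Nat.mod_eq_of_lt (idx w₁).2
          have h2 := Nat.mod_eq_of_lt (idx w₂).2
          unfold Nat.ModEq at this
          omega
        exact hwne (idx.injective (Fin.ext hww))
      · have := hG3 u u₁ u₂ h₁ h₂ hu
        rw [hk₁, hk₂] at this
        omega
    · -- cross vs fiber
      rw [if_neg h₁.ne, if_pos h₂]
      simp only at h₁ h₂ ⊢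
      have hmd : ((idx v : ℕ) + (idx w₁ : ℕ)) % n < n := Nat.mod_lt _ (by omega)
      obtain ⟨k', hk'⟩ : ∃ k', cG s(u, u₁) = k' + 1 :=
        ⟨cG s(u, u₁) - 1, by have := hcG1 h₁; omega⟩
      have hle : cG s(u, u₁) ≤ m u := hcGle h₁
      rw [hk']
      simp only [Nat.add_sub_cancel]
      have : (k' + 1) * n ≤ m u * n := hmul (hk' ▸ hle)
      have hkn : (k' + 1) * n = k' * n + n := by ring
      omega
    · -- fiber vs cross
      rw [if_pos h₁, if_neg h₂.ne]
      simp only at h₁ h₂ ⊢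
      have hmd : ((idx v : ℕ) + (idx w₂ : ℕ)) % n < n := Nat.mod_lt _ (by omega)
      obtain ⟨k', hk'⟩ : ∃ k', cG s(u, u₂) = k' + 1 :=
        ⟨cG s(u, u₂) - 1, by have := hcG1 h₂; omega⟩
      have hle : cG s(u, u₂) ≤ m u := hcGle h₂
      rw [hk']
      simp only [Nat.add_sub_cancel]
      have : (k' + 1) * n ≤ m u * n := hmul (hk' ▸ hle)
      have hkn : (k' + 1) * n = k' * n + n := by ring
      omega
    · -- both fiber edges
      rw [if_pos h₁, if_pos h₂]
      simp only at h₁ h₂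
      subst h₁
      have hwne : w₁ ≠ w₂ := by
        intro hww
        apply hne
        rw [hww, ← h₂]
      have := hd2 v w₁ w₂ hh₁ hh₂ hwne
      omega
  · -- interval property
    rintro ⟨u, v⟩ x y z ⟨qx, hqx, hcx⟩ ⟨qz, hqz, hcz⟩ hxy hyz
    rcases le_or_gt y (m u * n) with hy | hy
    · -- y is in a block
      rcases achInv u v qx hqx with ⟨kx, hkx, hx1, hx2⟩ | ⟨hx1, hx2⟩
      · rw [hcx] at hx1 hx2
        have hy1 : 1 ≤ y := by
          have hx1'' : 1 ≤ x := by omega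
          omega
        obtain ⟨Qy, Ry, hRy, hQRy⟩ : ∃ Q R, R < n ∧ y - 1 = Q * n + R :=
          ⟨(y - 1) / n, (y - 1) % n, Nat.mod_lt _ (by omega),
            (Nat.div_add_mod' (y - 1) n).symm⟩
        have hQn : (Qy + 1) * n = Qy * n + n := by ring
        have hkx1 : 1 ≤ kx := by
          obtain ⟨w, hw, rfl⟩ := hkx
          exact hcG1 hw
        have hkxky : kx ≤ Qy + 1 := by
          by_contra hc
          push_neg at hc
          have h2 : (Qy + 1) * n ≤ (kx - 1) * n := hmul (by omega)
          omega
        have hkym : Qy + 1 ≤ m u := by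
          by_contra hc
          push_neg at hc
          have h2 : m u * n ≤ Qy * n := hmul (by omega)
          omega
        have hmSu : m u ∈ S u := hmS u ⟨kx, hkx⟩
        obtain ⟨w, hw, hcw⟩ := hG4 u kx (Qy + 1) (m u) hkx hmSu hkxky hkym
        obtain ⟨p, hp, hcp⟩ := achG u v w hw y
          (by rw [hcw]; simp only [Nat.add_sub_cancel]; omega)
          (by rw [hcw]; omega)
        exact ⟨p, hp, hcp⟩
      · -- x in top band, contradiction
        rw [hcx] at hx1
        omega
    · -- y in top band
      rcases achInv u v qz hqz with ⟨kz, hkz, hz1, hz2⟩ | ⟨hz1, hz2⟩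
      · rw [hcz] at hz2
        have hkzm : kz ≤ m u := by
          obtain ⟨w, hw, rfl⟩ := hkz
          exact hcGle hw
        have := hmul hkzm
        omega
      · rw [hcz] at hz2
        obtain ⟨p, hp, hcp⟩ := achH u v y (by omega) (by omega)
        exact ⟨p, hp, hcp⟩

end AuxIntervalLex

/-- If `G, H ∈ 𝔑`, `H` is `r`-regular and `|V(H)| = n`, then `G[H] ∈ 𝔑`;
moreover `w(G[H]) ≤ w(G)·n + r` and `W(G[H]) ≥ W(G)·n + r`. -/
theorem lexProd_interval_colorable {α β : Type*} [Fintype α] [Fintype β]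
    (G : SimpleGraph α) (H : SimpleGraph β) (r n : ℕ)
    (hG : IntervalColorable G) (hH : IntervalColorable H)
    (hreg : IsRegularGraph H r) (hcard : Fintype.card β = n) :
    IntervalColorable (lexProd G H) ∧
    wNum (lexProd G H) ≤ wNum G * n + r ∧
    WNum (lexProd G H) ≥ WNum G * n + r := by
  obtain ⟨tG, htG, hGt⟩ := hG
  have hGedge : ∃ a b, G.Adj a b := edge_of_has' htG hGt
  obtain ⟨sH', hsH', hHs⟩ := hH
  have hHedge : ∃ a b, H.Adj a b := edge_of_has' hsH' hHs
  have hr1 : 1 ≤ r := by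
    obtain ⟨a, b, hab⟩ := hHedge
    have h0 := hreg a
    have : 0 < (H.neighborSet a).ncard := (Set.ncard_pos (Set.toFinite _)).2 ⟨b, hab⟩
    omega
  have hne : {t | HasIntervalColoring G t}.Nonempty := ⟨tG, hGt⟩
  have hwmem : HasIntervalColoring G (wNum G) := Nat.sInf_mem hne
  have hWmem : HasIntervalColoring G (WNum G) := Nat.sSup_mem hne (has_bddAbove' G)
  have hw1 : 1 ≤ wNum G := by
    rcases Nat.eq_zero_or_pos (wNum G) with h | h
    · exact absurd (h ▸ hwmem) (not_has_zero' hGedge)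
    · exact h
  have hW1 : 1 ≤ WNum G := by
    rcases Nat.eq_zero_or_pos (WNum G) with h | h
    · exact absurd (h ▸ hWmem) (not_has_zero' hGedge)
    · exact h
  have hkw := key_lex' G H r n (wNum G) hw1 hwmem ⟨sH', hsH', hHs⟩ hreg hcard
  have hkW := key_lex' G H r n (WNum G) hW1 hWmem ⟨sH', hsH', hHs⟩ hreg hcard
  refine ⟨⟨wNum G * n + r, by omega, hkw⟩, ?_, ?_⟩
  · exact Nat.sInf_le hkw
  · exact le_csSup (has_bddAbove' (lexProd G H)) hkW
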